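/- Soundness of the inductive assertion method: Given an automaton A with cutpoint set K and a valid annotation an for spec {P}{Q} (meaning an(init)=P, an(fin)=Q, and every verification condition along segments between cutpoints holds), then in any initial trace τ of A with τ₀ ⊨ P, at every position i with ctrl(τᵢ) ∈ K we have τᵢ ⊨ an(ctrl(τᵢ)). Consequently A ⊨ {P}{Q}. -/

import Mathlib

/-- An automaton with control points `C` and data stores `S`. -/
structure Automaton (C S : Type) where
  init : C
  fin : C
  step : C × S → C × S → Prop

namespace Automaton

variable {C S : Type}

/-- A trace: a nonempty list of states consecutive under the transition relation. -/
def IsTrace (A : Automaton C S) (τ : List (C × S)) : Prop :=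
  τ ≠ [] ∧ List.Chain' A.step τ

/-- An initial trace starts at control point `init`. -/
def InitTrace (A : Automaton C S) (τ : List (C × S)) : Prop :=
  A.IsTrace τ ∧ ∃ s, τ.head? = some (A.init, s)

/-- Basic semantics of unary specs: every finite initial trace from a `P`-store
that ends at control `fin` ends in a `Q`-store. -/
def Sat (A : Automaton C S) (P Q : S → Prop) : Prop :=
  ∀ τ s₀ n sl, A.InitTrace τ → τ.head? = some (A.init, s₀) → P s₀ →
    τ.getLast? = some (n, sl) → n = A.fin → Q sl

/-- Edge of the control-flow graph. -/
def Edge (A : Automaton C S) (n m : C) : Prop := ∃ s t, A.step (n, s) (m, t)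

/-- A cutpoint set contains `init` and `fin` and cuts every CFG cycle. -/
def IsCutset (A : Automaton C S) (K : Set C) : Prop :=
  A.init ∈ K ∧ A.fin ∈ K ∧
  ∀ vs : List C, List.Chain' A.Edge vs → 1 < vs.length →
    vs.head? = vs.getLast? → ∃ v ∈ vs, v ∈ K

/-- A segment: a CFG path of length > 1 with endpoints in `K` and no
intermediate cutpoints. -/
def IsSeg (A : Automaton C S) (K : Set C) (vs : List C) : Prop :=
  List.Chain' A.Edge vs ∧ 1 < vs.length ∧
  (∃ h, vs.head? = some h ∧ h ∈ K) ∧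
  (∃ l, vs.getLast? = some l ∧ l ∈ K) ∧
  ∀ i (hi : i < vs.length), 0 < i → i + 1 < vs.length → vs.get ⟨i, hi⟩ ∉ K

/-- The control path of a trace. -/
def cpath (τ : List (C × S)) : List C := τ.map Prod.fst

/-- Validity of an annotation: every verification condition along segments
between cutpoints holds. -/
def ValidAnno (A : Automaton C S) (K : Set C) (an : C → S → Prop) : Prop :=
  ∀ vs τ α ω s t, A.IsSeg K vs → A.IsTrace τ → cpath τ = vs →
    τ.head? = some (α, s) → τ.getLast? = some (ω, t) → an α s → an ω t

end Automaton

open Automaton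

private lemma head?_eq_get {α : Type*} (l : List α) (h2 : 0 < l.length) :
    l.head? = some (l.get ⟨0, h2⟩) := by
  cases l with
  | nil => simp at h2
  | cons a t => simp

private lemma getLast?_eq_get {α : Type*} (l : List α) (h2 : 0 < l.length) :
    l.getLast? = some (l.get ⟨l.length - 1, by omega⟩) := by
  rw [List.getLast?_eq_getLast (by intro h; simp [h] at h2), List.getLast_eq_getElem]; rfl


/-- **Soundness of the inductive assertion method.** -/
theorem iam_soundness {C S : Type} [Finite C]
    (A : Automaton C S) (K : Set C) (P Q : S → Prop) (an : C → S → Prop)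
    (hne : A.init ≠ A.fin)
    (hfinality : ∀ p q, A.step p q → p.1 ≠ A.fin)
    (hnonstutter : ∀ p q, A.step p q → p.1 ≠ q.1)
    (hK : A.IsCutset K)
    (hP : an A.init = P) (hQ : an A.fin = Q)
    (hvalid : A.ValidAnno K an) :
    (∀ τ s₀, A.InitTrace τ → τ.head? = some (A.init, s₀) → P s₀ →
      ∀ i (hi : i < τ.length), (τ.get ⟨i, hi⟩).1 ∈ K →
        an (τ.get ⟨i, hi⟩).1 (τ.get ⟨i, hi⟩).2) ∧
    A.Sat P Q := by
  classical
  have main : ∀ τ s₀, A.InitTrace τ → τ.head? = some (A.init, s₀) → P s₀ →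
      ∀ i (hi : i < τ.length), (τ.get ⟨i, hi⟩).1 ∈ K →
        an (τ.get ⟨i, hi⟩).1 (τ.get ⟨i, hi⟩).2 := by
    intro τ s₀ hτ hhead hp i
    induction i using Nat.strong_induction_on with
    | _ i IH =>
      intro hi hiK
      have hlen0 : 0 < τ.length := by omega
      have hget0 : τ.get ⟨0, hlen0⟩ = (A.init, s₀) := by
        have := head?_eq_get τ hlen0
        rw [hhead] at this
        exact (Option.some.inj this).symm
      rcases Nat.eq_zero_or_pos i with h0 | h0
      · have : (⟨i, hi⟩ : Fin τ.length) = ⟨0, hlen0⟩ := by simp [h0]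
        rw [this, hget0]
        simpa [hP] using hp
      · set Pk : ℕ → Prop := fun j => ∃ hj : j < τ.length, (τ.get ⟨j, hj⟩).1 ∈ K with hPk
        set j := Nat.findGreatest Pk (i - 1) with hj
        have h0P : Pk 0 := ⟨hlen0, by rw [hget0]; exact hK.1⟩
        have hjP : Pk j := Nat.findGreatest_spec (m := 0) (by omega) h0P
        have hji : j ≤ i - 1 := Nat.findGreatest_le _
        obtain ⟨hjlt, hjK⟩ := hjP
        have hnotK : ∀ k, j < k → k ≤ i - 1 → ¬ Pk k := by
          intro k hk1 hk2
          exact Nat.findGreatest_is_greatest hk1 hk2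
        set τ' := (τ.drop j).take (i - j + 1) with hτ'
        have hlen' : τ'.length = i - j + 1 := by
          simp [hτ', List.length_take, List.length_drop]; omega
        have hget' : ∀ k (hk : k < τ'.length) (hk' : j + k < τ.length),
            τ'.get ⟨k, hk⟩ = τ.get ⟨j + k, hk'⟩ := by
          intro k hk hk'
          simp [hτ', List.getElem_take, List.getElem_drop]
        have hinfix : τ' <:+: τ :=
          ((List.take_prefix _ _).isInfix).trans (List.drop_suffix _ _).isInfix
        have hchain' : List.Chain' A.step τ' := hτ.1.2.infix hinfix
        have hne' : τ' ≠ [] := by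
          intro h; rw [h] at hlen'; simp at hlen'
        have hheadget : τ'.get ⟨0, by omega⟩ = τ.get ⟨j, by omega⟩ := by
          rw [hget' 0 (by omega) (by omega)]
          congr 1
        have hlastget : τ'.get ⟨τ'.length - 1, by omega⟩ = τ.get ⟨i, hi⟩ := by
          rw [hget' (τ'.length - 1) (by omega) (by omega)]
          congr 1
          simp [hlen']
          omega
        have hseg : A.IsSeg K (cpath τ') := by
          refine ⟨?_, ?_, ?_, ?_, ?_⟩
          · rw [cpath]; unfold List.Chain'; rw [List.isChain_map]
            exact hchain'.imp (fun p q h => ⟨p.2, q.2, h⟩)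
          · simp [cpath, hlen']; omega
          · refine ⟨(τ.get ⟨j, by omega⟩).1, ?_, hjK⟩
            rw [cpath, List.head?_map, head?_eq_get τ' (by omega), hheadget]
            rfl
          · refine ⟨(τ.get ⟨i, hi⟩).1, ?_, hiK⟩
            rw [cpath, List.getLast?_map, getLast?_eq_get τ' (by omega), hlastget]
            rfl
          · intro k hk hk0 hk1
            have hkl : k < τ'.length := by simpa [cpath] using hk
            have hkl' : j + k < τ.length := by omega
            have : (cpath τ').get ⟨k, hk⟩ = (τ'.get ⟨k, hkl⟩).1 := by
              simp [cpath]
            rw [this, hget' k hkl hkl']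
            intro hmem
            refine hnotK (j + k) (by omega) (by simp [cpath, hlen'] at hk1; omega) ⟨hkl', hmem⟩
        have hIH : an (τ.get ⟨j, by omega⟩).1 (τ.get ⟨j, by omega⟩).2 :=
          IH j (by omega) (by omega) hjK
        have := hvalid (cpath τ') τ' (τ.get ⟨j, by omega⟩).1 (τ.get ⟨i, hi⟩).1
          (τ.get ⟨j, by omega⟩).2 (τ.get ⟨i, hi⟩).2 hseg ⟨hne', hchain'⟩ rfl
          (by rw [head?_eq_get τ' (by omega), hheadget])
          (by rw [getLast?_eq_get τ' (by omega), hlastget])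
          hIH
        exact this
  refine ⟨main, ?_⟩
  intro τ s₀ n sl hτ hhead hp hlast hn
  have hne' : τ ≠ [] := hτ.1.1
  have hl0 : 0 < τ.length := List.length_pos_iff.2 hne'
  have hlastget : τ.get ⟨τ.length - 1, by omega⟩ = (n, sl) := by
    have := getLast?_eq_get τ hl0
    rw [hlast] at this
    exact (Option.some.inj this).symm
  have := main τ s₀ hτ hhead hp (τ.length - 1) (by omega)
    (by rw [hlastget]; subst hn; exact hK.2.1)
  rw [hlastget] at this
  subst hn
  simpa [hQ] using this
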